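/- Let H, Q₁, …, Q_N be linear operators on a complex vector space and |S₀⟩ a vector satisfying: H|S₀⟩ = E₀|S₀⟩; [H, Q_l]|S₀⟩ = ℰ_l Q_l|S₀⟩ for each l; [[H,Q_l],Q_l] = 0 for each l; [Q_l, Q_k] = 0 for all l,k; and [[H,Q_l],Q_k] = 0 for all l ≠ k. Then for every multi-index (m₁,…,m_N) of nonnegative integers, H (Π_l Q_l^{m_l})|S₀⟩ = (E₀ + Σ_l m_l ℰ_l)(Π_l Q_l^{m_l})|S₀⟩. -/

import Mathlib

lemma mlrsga1_push {V : Type*} [AddCommGroup V] [Module ℂ V]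
    (K : Module.End ℂ V) (L : List (Module.End ℂ V))
    (h : ∀ A ∈ L, ⁅K, A⁆ = 0) (v : V) :
    K (L.prod v) = L.prod (K v) := by
  induction L with
  | nil => simp
  | cons a T ih =>
    have ha : K * a = a * K := by
      have := h a (List.mem_cons_self)
      rw [Ring.lie_def, sub_eq_zero] at this
      exact this
    have hT : K ((T.prod) v) = T.prod (K v) :=
      ih (fun A hA => h A (List.mem_cons_of_mem a hA))
    calc K ((a :: T).prod v) = (K * a) (T.prod v) := by
          simp [List.prod_cons, Module.End.mul_apply]
      _ = a (K (T.prod v)) := by rw [ha]; simp [Module.End.mul_apply]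
      _ = a (T.prod (K v)) := by rw [hT]
      _ = (a :: T).prod (K v) := by simp [List.prod_cons, Module.End.mul_apply]

lemma mlrsga1_aux {V : Type*} [AddCommGroup V] [Module ℂ V]
    (H : Module.End ℂ V) :
    ∀ (L : List (Module.End ℂ V × ℂ)) (c : ℂ) (v : V),
      H v = c • v →
      (∀ p ∈ L, ⁅H, p.1⁆ v = p.2 • (p.1 v)) →
      (∀ p ∈ L, ∀ q ∈ L, ⁅p.1, q.1⁆ = 0) →
      (∀ p ∈ L, ∀ q ∈ L, ⁅⁅H, p.1⁆, q.1⁆ = 0) →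
      H ((L.map Prod.fst).prod v) =
        (c + (L.map Prod.snd).sum) • ((L.map Prod.fst).prod v) := by
  intro L
  induction L with
  | nil => intro c v h1 _ _ _; simpa using h1
  | cons a T ih =>
    intro c v h1 h2 h4 h5
    set w := ((T.map Prod.fst).prod) v with hw
    have hHw : H w = (c + (T.map Prod.snd).sum) • w :=
      ih c v h1 (fun p hp => h2 p (List.mem_cons_of_mem a hp))
        (fun p hp q hq => h4 p (List.mem_cons_of_mem a hp) q (List.mem_cons_of_mem a hq))
        (fun p hp q hq => h5 p (List.mem_cons_of_mem a hp) q (List.mem_cons_of_mem a hq))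
    have hbr : ⁅H, a.1⁆ w = a.2 • (a.1 w) := by
      have step1 : ⁅H, a.1⁆ w = (T.map Prod.fst).prod (⁅H, a.1⁆ v) := by
        rw [hw]
        apply mlrsga1_push
        intro A hA
        obtain ⟨q, hq, rfl⟩ := List.mem_map.mp hA
        exact h5 a (List.mem_cons_self) q (List.mem_cons_of_mem a hq)
      rw [step1, h2 a (List.mem_cons_self), map_smul]
      congr 1
      rw [hw, ← mlrsga1_push a.1]
      intro A hA
      obtain ⟨q, hq, rfl⟩ := List.mem_map.mp hA
      exact h4 a (List.mem_cons_self) q (List.mem_cons_of_mem a hq)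
    have key : H (a.1 w) = a.1 (H w) + ⁅H, a.1⁆ w := by
      rw [Ring.lie_def]
      simp [Module.End.mul_apply]
    have : H (a.1 w) = (c + (a.2 + (T.map Prod.snd).sum)) • (a.1 w) := by
      rw [key, hbr, hHw, map_smul]
      rw [add_smul, add_smul, add_smul]
      abel
    simpa [List.prod_cons, Module.End.mul_apply, hw] using this

theorem mlrsga1_tower {V : Type*} [AddCommGroup V] [Module ℂ V] (N : ℕ)
    (H : Module.End ℂ V) (Q : Fin N → Module.End ℂ V)
    (E₀ : ℂ) (ℰ : Fin N → ℂ) (S₀ : V)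
    (h1 : H S₀ = E₀ • S₀)
    (h2 : ∀ l, ⁅H, Q l⁆ S₀ = ℰ l • ((Q l) S₀))
    (h3 : ∀ l, ⁅⁅H, Q l⁆, Q l⁆ = 0)
    (h4 : ∀ l k, ⁅Q l, Q k⁆ = 0)
    (h5 : ∀ l k, l ≠ k → ⁅⁅H, Q l⁆, Q k⁆ = 0) :
    ∀ m : Fin N → ℕ,
      H ((List.ofFn fun l => Q l ^ m l).prod S₀) =
        (E₀ + ∑ l, (m l : ℂ) * ℰ l) • ((List.ofFn fun l => Q l ^ m l).prod S₀) := by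
  intro m
  set L : List (Module.End ℂ V × ℂ) :=
    (List.ofFn fun l => List.replicate (m l) (Q l, ℰ l)).flatten with hL
  have hmem : ∀ p ∈ L, ∃ l, p = (Q l, ℰ l) := by
    intro p hp
    rw [hL, List.mem_flatten] at hp
    obtain ⟨t, ht, hpt⟩ := hp
    rw [List.mem_ofFn] at ht
    obtain ⟨l, rfl⟩ := ht
    exact ⟨l, (List.eq_of_mem_replicate hpt)⟩
  have hfst : L.map Prod.fst = (List.ofFn fun l => List.replicate (m l) (Q l)).flatten := by
    rw [hL, List.map_flatten]
    congr 1
    rw [List.map_ofFn]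
    congr 1
    funext l
    simp [List.map_replicate]
  have hprod : (L.map Prod.fst).prod = (List.ofFn fun l => Q l ^ m l).prod := by
    rw [hfst, List.prod_flatten, List.map_ofFn]
    refine congrArg List.prod (congrArg List.ofFn (funext fun l => ?_))
    show (List.replicate (m l) (Q l)).prod = Q l ^ m l
    exact List.prod_replicate _ _
  have hsum : (L.map Prod.snd).sum = ∑ l, (m l : ℂ) * ℰ l := by
    rw [hL, List.map_flatten, List.map_ofFn, List.sum_flatten, List.map_ofFn, List.sum_ofFn]
    congr 1
    funext l
    simp [List.map_replicate, List.sum_replicate, nsmul_eq_mul]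
  have main := mlrsga1_aux H L E₀ S₀ h1
    (by
      intro p hp
      obtain ⟨l, rfl⟩ := hmem p hp
      exact h2 l)
    (by
      intro p hp q hq
      obtain ⟨l, rfl⟩ := hmem p hp
      obtain ⟨k, rfl⟩ := hmem q hq
      exact h4 l k)
    (by
      intro p hp q hq
      obtain ⟨l, rfl⟩ := hmem p hp
      obtain ⟨k, rfl⟩ := hmem q hq
      by_cases hlk : l = k
      · subst hlk; exact h3 l
      · exact h5 l k hlk)
  rw [hprod, hsum] at main
  exact main
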